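/- Let n and s be positive integers, and let r = ⌈n/(s+1)⌉. Then for all integers k with s+1 ≤ k ≤ s+r-1, we have C(n+k-r-1, k) ≥ ∑_{t=1}^{r} C(r-t, k-s) C(n-t+s-1, s-1). -/

import Mathlib

open Finset

/-- Vandermonde's identity as a `range` sum. -/
lemma my_vander (m n k : ℕ) :
    (m + n).choose k = ∑ i ∈ range (k + 1), m.choose i * n.choose (k - i) := by
  rw [Nat.add_choose_eq, Finset.Nat.sum_antidiagonal_eq_sum_range_succ_mk]

/-- Hockey stick, with an additive correction term to avoid truncated subtraction. -/
lemma my_hockey (j c : ℕ) : ∀ t : ℕ,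
    j.choose (c + 1) + ∑ i ∈ range t, (i + j).choose c = (t + j).choose (c + 1) := by
  intro t
  induction t with
  | zero => simp
  | succ t ih =>
      rw [Finset.sum_range_succ, ← Nat.add_assoc, ih]
      have : t + 1 + j = (t + j) + 1 := by omega
      rw [this, Nat.choose_succ_succ' (t + j) c]
      omega

/-- Trinomial revision: `C(σ+j, j) C(σ, d) = C(d+j, j) C(σ+j, d+j)`. -/
lemma my_trinom (σ j d : ℕ) :
    (σ + j).choose j * σ.choose d = (d + j).choose j * (σ + j).choose (d + j) := by
  rcases le_or_gt d σ with h | h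
  · have hK : 0 < j.factorial * d.factorial * (σ - d).factorial :=
      Nat.mul_pos (Nat.mul_pos (Nat.factorial_pos _) (Nat.factorial_pos _)) (Nat.factorial_pos _)
    apply Nat.eq_of_mul_eq_mul_right hK
    have e1 : (σ + j).choose j * j.factorial * σ.factorial = (σ + j).factorial := by
      have := Nat.choose_mul_factorial_mul_factorial (Nat.le_add_left j σ)
      simpa using this
    have e2 : σ.choose d * d.factorial * (σ - d).factorial = σ.factorial :=
      Nat.choose_mul_factorial_mul_factorial h
    have e3 : (d + j).choose j * j.factorial * d.factorial = (d + j).factorial := by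
      have := Nat.choose_mul_factorial_mul_factorial (Nat.le_add_left j d)
      simpa using this
    have e4 : (σ + j).choose (d + j) * (d + j).factorial * (σ - d).factorial
        = (σ + j).factorial := by
      have hdj : d + j ≤ σ + j := by omega
      have := Nat.choose_mul_factorial_mul_factorial hdj
      have hsub : σ + j - (d + j) = σ - d := by omega
      rwa [hsub] at this
    calc (σ + j).choose j * σ.choose d * (j.factorial * d.factorial * (σ - d).factorial)
        = ((σ + j).choose j * j.factorial) * (σ.choose d * d.factorial * (σ - d).factorial) := by
          ring
      _ = ((σ + j).choose j * j.factorial) * σ.factorial := by rw [e2]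
      _ = (σ + j).factorial := e1
      _ = (σ + j).choose (d + j) * (d + j).factorial * (σ - d).factorial := e4.symm
      _ = ((d + j).choose j * j.factorial * d.factorial) * ((σ + j).choose (d + j) *
            (σ - d).factorial) := by rw [e3]; ring
      _ = (d + j).choose j * (σ + j).choose (d + j) *
            (j.factorial * d.factorial * (σ - d).factorial) := by ring
  · have h1 : σ.choose d = 0 := Nat.choose_eq_zero_of_lt h
    have h2 : (σ + j).choose (d + j) = 0 := Nat.choose_eq_zero_of_lt (by omega)
    rw [h1, h2]; ring

/-- Cross monotonicity of binomial ratios: for `a ≤ b`,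
`C(N+1,a) C(N,b) ≤ C(N,a) C(N+1,b)`. -/
lemma my_cross (N a b : ℕ) (hab : a ≤ b) :
    (N + 1).choose a * N.choose b ≤ N.choose a * (N + 1).choose b := by
  have hpos : 0 < N + 1 := Nat.succ_pos N
  apply Nat.le_of_mul_le_mul_right _ hpos
  have h1 : N.choose a * (N + 1) = (N + 1).choose a * (N + 1 - a) :=
    Nat.choose_mul_succ_eq N a
  have h2 : N.choose b * (N + 1) = (N + 1).choose b * (N + 1 - b) :=
    Nat.choose_mul_succ_eq N b
  calc (N + 1).choose a * N.choose b * (N + 1)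
      = (N + 1).choose a * (N.choose b * (N + 1)) := by ring
    _ = (N + 1).choose a * ((N + 1).choose b * (N + 1 - b)) := by rw [h2]
    _ ≤ (N + 1).choose a * ((N + 1).choose b * (N + 1 - a)) := by
        apply Nat.mul_le_mul_left
        exact Nat.mul_le_mul_left _ (Nat.sub_le_sub_left hab _)
    _ = (N.choose a * (N + 1)) * (N + 1).choose b := by rw [h1]; ring
    _ = N.choose a * (N + 1).choose b * (N + 1) := by ring

/-- `r * C(a, s) = C(a+1, s+1)` when `a + 1 = r * (s+1)`-type identity, general form:
`r * C(m, s) * (s+1) = C(m+1, s+1) * (s+1)`-cancellation helper. -/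
lemma my_absorb (m sv r : ℕ) (h : m + 1 = r * (sv + 1)) :
    r * m.choose sv = (m + 1).choose (sv + 1) := by
  have hm := Nat.add_one_mul_choose_eq m sv
  -- (m+1) * C(m, sv) = C(m+1, sv+1) * (sv+1)
  apply Nat.eq_of_mul_eq_mul_right (Nat.succ_pos sv)
  calc r * m.choose sv * (sv + 1) = (m + 1) * m.choose sv := by rw [h]; ring
    _ = (m + 1).choose (sv + 1) * (sv + 1) := hm

/-- The `j = 1` boundary identity:
`∑_{d<s} (d+1) C(r, d+2) C(rs, s-1-d) = C(rs, s+1)`. -/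
lemma my_base_eq (r s : ℕ) (hr : 1 ≤ r) (hs : 1 ≤ s) :
    ∑ d ∈ range s, (d + 1) * (r.choose (d + 2) * (r * s).choose (s - 1 - d))
      = (r * s).choose (s + 1) := by
  have hr1 : r - 1 + 1 = r := Nat.succ_pred_eq_of_pos hr
  set m := r * s with hm
  set E := ∑ d ∈ range s, (d + 1) * (r.choose (d + 2) * m.choose (s - 1 - d)) with hE
  -- key reindex identity
  have key : ∀ d : ℕ, (d + 1) * r.choose (d + 1) = r * (r - 1).choose d := by
    intro d
    have h := Nat.add_one_mul_choose_eq (r - 1) d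
    simp only [Nat.succ_eq_add_one, hr1] at h
    rw [Nat.mul_comm]
    exact h.symm
  -- A : the weighted Vandermonde sum
  have hA : ∑ d ∈ range (s + 1), (d + 1) * (r.choose (d + 1) * m.choose (s - d))
      = r * (r - 1 + m).choose s := by
    have h1 : ∀ d ∈ range (s + 1), (d + 1) * (r.choose (d + 1) * m.choose (s - d))
        = r * ((r - 1).choose d * m.choose (s - d)) := by
      intro d _
      rw [← Nat.mul_assoc, key d, Nat.mul_assoc]
    rw [Finset.sum_congr rfl h1, ← Finset.mul_sum, my_vander (r - 1) m s]
  -- split the weight (d+1) = d + 1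
  have hsplit : ∑ d ∈ range (s + 1), (d + 1) * (r.choose (d + 1) * m.choose (s - d))
      = (∑ d ∈ range (s + 1), d * (r.choose (d + 1) * m.choose (s - d)))
        + ∑ d ∈ range (s + 1), r.choose (d + 1) * m.choose (s - d) := by
    rw [← Finset.sum_add_distrib]
    apply Finset.sum_congr rfl
    intro d _
    ring
  -- the d-weighted part is E
  have hEeq : ∑ d ∈ range (s + 1), d * (r.choose (d + 1) * m.choose (s - d)) = E := by
    rw [Finset.sum_range_succ' (fun d => d * (r.choose (d + 1) * m.choose (s - d))) s]
    simp only [Nat.zero_mul, Nat.add_zero]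
    apply Finset.sum_congr rfl
    intro e _
    have : s - (e + 1) = s - 1 - e := by omega
    rw [this]
  -- Vandermonde for (r+m).choose (s+1), with b = 0 peeled off
  have hB : (∑ i ∈ range (s + 1), r.choose (i + 1) * m.choose (s - i)) + m.choose (s + 1)
      = (r + m).choose (s + 1) := by
    rw [my_vander r m (s + 1),
      Finset.sum_range_succ' (fun i => r.choose i * m.choose (s + 1 - i)) (s + 1)]
    simp only [Nat.choose_zero_right, Nat.one_mul, Nat.succ_sub_succ_eq_sub, Nat.sub_zero]
  -- the absorption identity
  have h5 : r * (r - 1 + m).choose s = (r + m).choose (s + 1) := by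
    have hq : r * (s + 1) = m + r := by rw [hm]; ring
    have habs := my_absorb (r - 1 + m) s r (by omega)
    have h6 : r - 1 + m + 1 = r + m := by omega
    rwa [h6] at habs
  omega


/-- The reduced master inequality, proved by induction on `j`. -/
lemma my_main (r s : ℕ) (hs : 1 ≤ s) (hr2 : 2 ≤ r) :
    ∀ j, 1 ≤ j → ∀ N, j + 1 ≤ r → r * s + j ≤ N + 1 →
      ∑ d ∈ range s, (d + j).choose j * r.choose (d + j + 1) * N.choose (s - 1 - d)
        ≤ N.choose (s + j) := by
  intro j hj
  induction j, hj using Nat.le_induction with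
  | base =>
      intro N hjr hN
      have hN' : r * s ≤ N := by omega
      have hs1 : s + 1 ≤ r * s := by
        have h2s : 2 * s ≤ r * s := Nat.mul_le_mul_right s hr2
        omega
      clear hN hjr
      induction N, hN' using Nat.le_induction with
      | base =>
          have heq := my_base_eq r s (by omega) hs
          calc ∑ d ∈ range s, (d + 1).choose 1 * r.choose (d + 1 + 1) *
                  (r * s).choose (s - 1 - d)
              = ∑ d ∈ range s, (d + 1) * (r.choose (d + 2) * (r * s).choose (s - 1 - d)) := by
                apply Finset.sum_congr rfl
                intro d _
                rw [Nat.choose_one_right]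
                ring
            _ = (r * s).choose (s + 1) := heq
            _ ≤ (r * s).choose (s + 1) := le_refl _
      | succ N hNge ih =>
          have hpos : 0 < N.choose (s + 1) := Nat.choose_pos (by omega)
          apply Nat.le_of_mul_le_mul_right _ hpos
          calc (∑ d ∈ range s, (d + 1).choose 1 * r.choose (d + 1 + 1) *
                  (N + 1).choose (s - 1 - d)) * N.choose (s + 1)
              = ∑ d ∈ range s, ((d + 1).choose 1 * r.choose (d + 1 + 1)) *
                  ((N + 1).choose (s - 1 - d) * N.choose (s + 1)) := by
                rw [Finset.sum_mul]
                apply Finset.sum_congr rfl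
                intro d _
                ring
            _ ≤ ∑ d ∈ range s, ((d + 1).choose 1 * r.choose (d + 1 + 1)) *
                  (N.choose (s - 1 - d) * (N + 1).choose (s + 1)) := by
                apply Finset.sum_le_sum
                intro d _
                exact Nat.mul_le_mul (le_refl _) (my_cross N (s - 1 - d) (s + 1) (by omega))
            _ = (∑ d ∈ range s, (d + 1).choose 1 * r.choose (d + 1 + 1) *
                  N.choose (s - 1 - d)) * (N + 1).choose (s + 1) := by
                rw [Finset.sum_mul]
                apply Finset.sum_congr rfl
                intro d _
                ring
            _ ≤ N.choose (s + 1) * (N + 1).choose (s + 1) :=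
                Nat.mul_le_mul ih (le_refl _)
            _ = (N + 1).choose (s + 1) * N.choose (s + 1) := Nat.mul_comm _ _
  | succ j hj1 ih =>
      intro N hjr hN
      have hIH := ih N (by omega) (by omega)
      have hsub : s * (r - 1) + (s + j) ≤ N := by
        have hrs : s * (r - 1) + s = s * r := by
          have hr1 : r - 1 + 1 = r := by omega
          calc s * (r - 1) + s = s * (r - 1 + 1) := by ring
            _ = s * r := by rw [hr1]
        have hsr : s * r = r * s := Nat.mul_comm s r
        omega
      -- key termwise inequality
      have key : ∀ d ∈ range s,
          (s + j + 1) * ((d + (j + 1)).choose (j + 1) * r.choose (d + (j + 1) + 1))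
            ≤ (N - (s + j)) * ((d + j).choose j * r.choose (d + j + 1)) := by
        intro d hd
        have hd1 : d + 1 ≤ s := Finset.mem_range.mp hd
        rcases Nat.lt_or_ge r (d + j + 2) with hrd | hrd
        · have hz : r.choose (d + (j + 1) + 1) = 0 := by
            apply Nat.choose_eq_zero_of_lt
            omega
          rw [hz]
          simp
        · -- r ≥ d + j + 2
          set x := r - (d + j + 2) with hx
          have hrx : r = d + j + 2 + x := by omega
          have h1 : (j + 1) * (d + j + 1).choose (j + 1) = (d + j + 1) * (d + j).choose j := by
            have h := Nat.add_one_mul_choose_eq (d + j) j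
            rw [Nat.mul_comm]
            exact h.symm
          have h2 : (d + j + 2) * r.choose (d + j + 2) = (x + 1) * r.choose (d + j + 1) := by
            have h := Nat.choose_succ_right_eq r (d + j + 1)
            have hxx : r - (d + j + 1) = x + 1 := by omega
            rw [hxx] at h
            calc (d + j + 2) * r.choose (d + j + 2)
                = r.choose (d + j + 2) * (d + j + 2) := Nat.mul_comm _ _
              _ = r.choose (d + j + 1) * (x + 1) := h
              _ = (x + 1) * r.choose (d + j + 1) := Nat.mul_comm _ _
          -- the scalar inequality
          have hscalar : (s + j + 1) * ((d + j + 1) * (x + 1))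
              ≤ (s * (d + j + 1 + x)) * ((j + 1) * (d + j + 2)) := by
            rcases Nat.lt_or_ge s 2 with hs2 | hs2
            · -- s = 1, d = 0
              have hs1 : s = 1 := by omega
              have hd0 : d = 0 := by omega
              subst hs1 hd0
              have hle : x + 1 ≤ 0 + j + 1 + x := by omega
              calc (1 + j + 1) * ((0 + j + 1) * (x + 1))
                  ≤ (1 + j + 1) * ((0 + j + 1) * (0 + j + 1 + x)) :=
                    Nat.mul_le_mul (le_refl _) (Nat.mul_le_mul (le_refl _) hle)
                _ = 1 * (0 + j + 1 + x) * ((j + 1) * (0 + j + 2)) := by ring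
            · have hA : s + j + 1 ≤ s * (j + 1) := by nlinarith
              have hB : (d + j + 1) * (x + 1) ≤ (d + j + 1 + x) * (d + j + 2) := by nlinarith
              calc (s + j + 1) * ((d + j + 1) * (x + 1))
                  ≤ (s * (j + 1)) * ((d + j + 1 + x) * (d + j + 2)) := Nat.mul_le_mul hA hB
                _ = (s * (d + j + 1 + x)) * ((j + 1) * (d + j + 2)) := by ring
          have hNsub : s * (d + j + 1 + x) ≤ N - (s + j) := by
            have : s * (r - 1) = s * (d + j + 1 + x) := by
              congr 1
              omega
            omega
          have hP : (s + j + 1) * ((d + j + 1) * (x + 1))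
              ≤ (N - (s + j)) * ((j + 1) * (d + j + 2)) :=
            le_trans hscalar (Nat.mul_le_mul hNsub (le_refl _))
          -- multiply by (j+1)*(d+j+2) and cancel
          have hposf : 0 < (j + 1) * (d + j + 2) := by positivity
          apply Nat.le_of_mul_le_mul_left _ hposf
          calc ((j + 1) * (d + j + 2)) *
                ((s + j + 1) * ((d + (j + 1)).choose (j + 1) * r.choose (d + (j + 1) + 1)))
              = (s + j + 1) * (((j + 1) * (d + j + 1).choose (j + 1)) *
                  ((d + j + 2) * r.choose (d + j + 2))) := by ring
            _ = (s + j + 1) * (((d + j + 1) * (d + j).choose j) *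
                  ((x + 1) * r.choose (d + j + 1))) := by rw [h1, h2]
            _ = ((s + j + 1) * ((d + j + 1) * (x + 1))) *
                  ((d + j).choose j * r.choose (d + j + 1)) := by ring
            _ ≤ ((N - (s + j)) * ((j + 1) * (d + j + 2))) *
                  ((d + j).choose j * r.choose (d + j + 1)) :=
                Nat.mul_le_mul hP (le_refl _)
            _ = ((j + 1) * (d + j + 2)) *
                  ((N - (s + j)) * ((d + j).choose j * r.choose (d + j + 1))) := by ring
      -- assemble
      have hpos : 0 < s + j + 1 := by omega
      apply Nat.le_of_mul_le_mul_left _ hpos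
      calc (s + j + 1) * ∑ d ∈ range s,
              (d + (j + 1)).choose (j + 1) * r.choose (d + (j + 1) + 1) * N.choose (s - 1 - d)
          = ∑ d ∈ range s, ((s + j + 1) *
              ((d + (j + 1)).choose (j + 1) * r.choose (d + (j + 1) + 1))) *
              N.choose (s - 1 - d) := by
            rw [Finset.mul_sum]
            apply Finset.sum_congr rfl
            intro d _
            ring
        _ ≤ ∑ d ∈ range s, ((N - (s + j)) * ((d + j).choose j * r.choose (d + j + 1))) *
              N.choose (s - 1 - d) := by
            apply Finset.sum_le_sum
            intro d hd
            exact Nat.mul_le_mul (key d hd) (le_refl _)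
        _ = (N - (s + j)) * ∑ d ∈ range s,
              (d + j).choose j * r.choose (d + j + 1) * N.choose (s - 1 - d) := by
            rw [Finset.mul_sum]
            apply Finset.sum_congr rfl
            intro d _
            ring
        _ ≤ (N - (s + j)) * N.choose (s + j) := Nat.mul_le_mul (le_refl _) hIH
        _ = (s + j + 1) * N.choose (s + (j + 1)) := by
            have h := Nat.choose_succ_right_eq N (s + j)
            calc (N - (s + j)) * N.choose (s + j)
                = N.choose (s + j) * (N - (s + j)) := Nat.mul_comm _ _
              _ = N.choose (s + j + 1) * (s + j + 1) := h.symm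
              _ = (s + j + 1) * N.choose (s + (j + 1)) := Nat.mul_comm _ _

theorem stmt_3 (n s : ℕ) (hn : 0 < n) (hs : 0 < s) (r : ℕ) (hr : r = (n + s) / (s + 1))
    (k : ℕ) (hk1 : s + 1 ≤ k) (hk2 : k ≤ s + r - 1) :
    ∑ t ∈ Finset.Icc 1 r, (r - t).choose (k - s) * (n + s - 1 - t).choose (s - 1) ≤
      (n + k - r - 1).choose k := by
  have hr2 : 2 ≤ r := by omega
  set j := k - s with hj
  have hk : k = s + j := by omega
  have hj1 : 1 ≤ j := by omega
  have hjr : j + 1 ≤ r := by omega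
  have hrs1 : r * (s + 1) ≤ n + s := by
    rw [hr]
    exact Nat.div_mul_le_self (n + s) (s + 1)
  have hrs : r * s + r ≤ n + s := by
    have hexp : r * (s + 1) = r * s + r := by ring
    omega
  have hrn : r ≤ n := by
    have hsr : s ≤ r * s := Nat.le_mul_of_pos_left s (by omega)
    omega
  set N := n + k - r - 1 with hN
  have hNlow : r * s + j ≤ N + 1 := by omega
  calc ∑ t ∈ Finset.Icc 1 r, (r - t).choose j * (n + s - 1 - t).choose (s - 1)
      = ∑ i ∈ range r, (r - 1 - i).choose j * (n + s - 2 - i).choose (s - 1) := by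
        rw [← Finset.Ico_add_one_right_eq_Icc, Finset.sum_Ico_eq_sum_range]
        have hr11 : r + 1 - 1 = r := by omega
        rw [hr11]
        apply Finset.sum_congr rfl
        intro i _
        have e1 : r - (1 + i) = r - 1 - i := by omega
        have e2 : n + s - 1 - (1 + i) = n + s - 2 - i := by omega
        rw [e1, e2]
    _ = ∑ i ∈ range (r - j), (r - 1 - i).choose j * (n + s - 2 - i).choose (s - 1) := by
        symm
        apply Finset.sum_subset
        · exact Finset.range_subset_range.mpr (by omega)
        · intro i hi hni
          simp only [Finset.mem_range] at hi hni
          have hlt : r - 1 - i < j := by omega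
          rw [Nat.choose_eq_zero_of_lt hlt, Nat.zero_mul]
    _ = ∑ σ ∈ range (r - j), (σ + j).choose j * (N + σ).choose (s - 1) := by
        rw [← Finset.sum_range_reflect]
        apply Finset.sum_congr rfl
        intro σ hσ
        simp only [Finset.mem_range] at hσ
        have e1 : r - 1 - (r - j - 1 - σ) = σ + j := by omega
        have e2 : n + s - 2 - (r - j - 1 - σ) = N + σ := by omega
        rw [e1, e2]
    _ = ∑ σ ∈ range (r - j), (σ + j).choose j *
          ∑ d ∈ range s, σ.choose d * N.choose (s - 1 - d) := by
        apply Finset.sum_congr rfl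
        intro σ _
        congr 1
        have hc : N + σ = σ + N := by omega
        have hs1 : s - 1 + 1 = s := by omega
        rw [hc, my_vander σ N (s - 1), hs1]
    _ = ∑ σ ∈ range (r - j), ∑ d ∈ range s,
          (σ + j).choose j * (σ.choose d * N.choose (s - 1 - d)) := by
        apply Finset.sum_congr rfl
        intro σ _
        rw [Finset.mul_sum]
    _ = ∑ d ∈ range s, ∑ σ ∈ range (r - j),
          (σ + j).choose j * (σ.choose d * N.choose (s - 1 - d)) := Finset.sum_comm
    _ = ∑ d ∈ range s, (d + j).choose j * r.choose (d + j + 1) * N.choose (s - 1 - d) := by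
        apply Finset.sum_congr rfl
        intro d _
        have hterm : ∀ σ ∈ range (r - j),
            (σ + j).choose j * (σ.choose d * N.choose (s - 1 - d))
              = (σ + j).choose (d + j) * ((d + j).choose j * N.choose (s - 1 - d)) := by
          intro σ _
          have htri := my_trinom σ j d
          calc (σ + j).choose j * (σ.choose d * N.choose (s - 1 - d))
              = ((σ + j).choose j * σ.choose d) * N.choose (s - 1 - d) := by ring
            _ = ((d + j).choose j * (σ + j).choose (d + j)) * N.choose (s - 1 - d) := by
                rw [htri]
            _ = (σ + j).choose (d + j) * ((d + j).choose j * N.choose (s - 1 - d)) := by ring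
        rw [Finset.sum_congr rfl hterm, ← Finset.sum_mul]
        have hsum : ∑ σ ∈ range (r - j), (σ + j).choose (d + j) = r.choose (d + j + 1) := by
          have h := my_hockey j (d + j) (r - j)
          have hz : j.choose (d + j + 1) = 0 := Nat.choose_eq_zero_of_lt (by omega)
          have hrj : r - j + j = r := by omega
          rw [hz, Nat.zero_add, hrj] at h
          exact h
        rw [hsum]
        ring
    _ ≤ N.choose (s + j) := my_main r s hs hr2 j hj1 N hjr hNlow
    _ = N.choose k := by rw [hk]
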